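/- Let V be a finite nonempty set and p : V → ℝ with p(k) > 0 for all k ∈ V and Σ_{k ∈ V} p(k) = 1. Let (U_k)_{k ∈ V} be independent random variables each with the standard Gumbel distribution. Then the random variable max_{k ∈ V} (log p(k) + U_k) has the standard Gumbel distribution. -/

import Mathlib

open MeasureTheory ProbabilityTheory

/-- The standard Gumbel distribution on `ℝ`: the Borel probability measure with density
`x ↦ exp(−x − exp(−x))` with respect to Lebesgue measure. -/
noncomputable def stdGumbel : Measure ℝ :=
  volume.withDensity fun x => ENNReal.ofReal (Real.exp (-x - Real.exp (-x)))

lemma two_mul_le_exp (x : ℝ) : 2 * x ≤ Real.exp x := by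
  rcases le_or_gt x 1 with h | h
  · nlinarith [Real.add_one_le_exp x]
  · have h1 : Real.exp x = Real.exp 1 * Real.exp (x - 1) := by
      rw [← Real.exp_add]; ring_nf
    nlinarith [Real.add_one_le_exp (x - 1), Real.exp_pos (x - 1), Real.exp_one_gt_d9]

lemma gumbel_deriv (t : ℝ) :
    HasDerivAt (fun t => Real.exp (-Real.exp (-t))) (Real.exp (-t - Real.exp (-t))) t := by
  have h1 : HasDerivAt (fun t : ℝ => -Real.exp (-t)) (Real.exp (-t)) t := by
    have h := ((hasDerivAt_neg t).exp).neg
    simp only [mul_neg, mul_one, neg_neg] at h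
    exact h
  have := h1.exp
  simpa [Real.exp_add, ← Real.exp_add, mul_comm, sub_eq_add_neg] using this

lemma gumbel_integrableOn (a : ℝ) :
    IntegrableOn (fun t => Real.exp (-t - Real.exp (-t))) (Set.Iic a) := by
  refine (integrableOn_exp_Iic a).mono' ?_ ?_
  · exact (Real.continuous_exp.comp (by fun_prop)).aestronglyMeasurable
  · filter_upwards with t
    rw [Real.norm_eq_abs, abs_of_pos (Real.exp_pos _)]
    apply Real.exp_le_exp.2
    have := two_mul_le_exp (-t)
    linarith

lemma gumbel_integral_Iic (a : ℝ) :
    ∫ t in Set.Iic a, Real.exp (-t - Real.exp (-t)) = Real.exp (-Real.exp (-a)) := by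
  have htend : Filter.Tendsto (fun t => Real.exp (-Real.exp (-t))) Filter.atBot (nhds 0) := by
    exact Real.tendsto_exp_atBot.comp
      (Filter.tendsto_neg_atTop_atBot.comp
        (Real.tendsto_exp_atTop.comp Filter.tendsto_neg_atBot_atTop))
  have := integral_Iic_of_hasDerivAt_of_tendsto' (f := fun t => Real.exp (-Real.exp (-t)))
    (fun x _ => gumbel_deriv x) (gumbel_integrableOn a) htend
  simpa using this

lemma stdGumbel_Iic (a : ℝ) :
    stdGumbel (Set.Iic a) = ENNReal.ofReal (Real.exp (-Real.exp (-a))) := by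
  rw [stdGumbel, withDensity_apply _ measurableSet_Iic,
    ← ofReal_integral_eq_lintegral_ofReal (gumbel_integrableOn a)
      (Filter.Eventually.of_forall fun t => (Real.exp_pos _).le),
    gumbel_integral_Iic]

instance : IsProbabilityMeasure stdGumbel := by
  constructor
  have h1 : Filter.Tendsto (fun a : ℝ => stdGumbel (Set.Iic a)) Filter.atTop
      (nhds (stdGumbel Set.univ)) := tendsto_measure_Iic_atTop _
  have h2 : Filter.Tendsto (fun a : ℝ => stdGumbel (Set.Iic a)) Filter.atTop (nhds 1) := by
    simp_rw [stdGumbel_Iic]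
    have : Filter.Tendsto (fun a : ℝ => Real.exp (-Real.exp (-a))) Filter.atTop
        (nhds (Real.exp (-0))) := by
      apply (Real.continuous_exp.tendsto _).comp
      apply Filter.Tendsto.neg
      exact Real.tendsto_exp_atBot.comp Filter.tendsto_neg_atTop_atBot
    simpa [Function.comp_def] using (ENNReal.continuous_ofReal.tendsto _).comp this
  exact tendsto_nhds_unique h1 h2

/-- If `p` is a probability vector on a finite nonempty set `V` with positive entries and
`(U_k)_{k ∈ V}` are independent standard Gumbel random variables, then
`max_{k ∈ V} (log p k + U k)` again has the standard Gumbel distribution. -/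
theorem max_of_gumbels_is_gumbel
    {V : Type*} [Fintype V] [Nonempty V]
    (p : V → ℝ) (hp : ∀ k, 0 < p k) (hps : ∑ k, p k = 1)
    {Ω : Type*} [MeasurableSpace Ω] (P : Measure Ω) [IsProbabilityMeasure P]
    (U : V → Ω → ℝ) (hUm : ∀ k, Measurable (U k))
    (hindep : iIndepFun U P)
    (hgumbel : ∀ k, P.map (U k) = stdGumbel) :
    P.map (fun ω => ⨆ k, (Real.log (p k) + U k ω)) = stdGumbel := by
  have hm : Measurable (fun ω => ⨆ k, (Real.log (p k) + U k ω)) :=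
    Measurable.iSup fun k => (hUm k).const_add _
  have : IsProbabilityMeasure (P.map (fun ω => ⨆ k, (Real.log (p k) + U k ω))) :=
    Measure.isProbabilityMeasure_map hm.aemeasurable
  refine Measure.ext_of_Iic _ _ fun a => ?_
  rw [Measure.map_apply hm measurableSet_Iic]
  have hset : (fun ω => ⨆ k, (Real.log (p k) + U k ω)) ⁻¹' Set.Iic a
      = ⋂ k, U k ⁻¹' Set.Iic (a - Real.log (p k)) := by
    ext ω
    simp only [Set.mem_preimage, Set.mem_Iic, Set.mem_iInter]
    rw [ciSup_le_iff (Set.Finite.bddAbove (Set.finite_range _))]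
    constructor <;> intro h k <;> have := h k <;> linarith
  rw [hset, hindep.meas_iInter (fun k => ⟨Set.Iic (a - Real.log (p k)), measurableSet_Iic, rfl⟩)]
  have hterm : ∀ k, P (U k ⁻¹' Set.Iic (a - Real.log (p k)))
      = ENNReal.ofReal (Real.exp (-(p k * Real.exp (-a)))) := by
    intro k
    rw [← Measure.map_apply (hUm k) measurableSet_Iic, hgumbel k, stdGumbel_Iic]
    congr 2
    rw [neg_sub, Real.exp_sub, Real.exp_log (hp k), Real.exp_neg]
    ring
  simp_rw [hterm]
  rw [← ENNReal.ofReal_prod_of_nonneg (fun k _ => (Real.exp_pos _).le),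
    ← Real.exp_sum, stdGumbel_Iic]
  congr 2
  have h2 : ∑ x : V, -(p x * Real.exp (-a)) = -((∑ x : V, p x) * Real.exp (-a)) := by
    rw [Finset.sum_mul, ← Finset.sum_neg_distrib]
  rw [h2, hps, one_mul]
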